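/- If Γ_E(R) has more than 3 vertices, then no associated prime of R is a leaf of Γ_E(R); i.e., if ann(y) is prime then deg[y] ≥ 2. -/

import Mathlib

open scoped Classical

noncomputable section

/-- The annihilator ideal of an element `x` of a commutative ring `R`. -/
def ann (R : Type*) [CommRing R] (x : R) : Ideal R := Ideal.torsionOf R R x

/-- The type of nonzero zero divisors of `R`. -/
def ZD (R : Type*) [CommRing R] : Type _ :=
  {x : R // x ≠ 0 ∧ ∃ y : R, y ≠ 0 ∧ x * y = 0}

/-- Two zero divisors are equivalent iff they have the same annihilator. -/
instance annSetoid (R : Type*) [CommRing R] : Setoid (ZD R) :=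
  ⟨fun a b => ann R a.1 = ann R b.1,
   fun _ => rfl, Eq.symm, Eq.trans⟩

/-- The vertex set of `Γ_E(R)`: equivalence classes of nonzero zero divisors. -/
def GammaEV (R : Type*) [CommRing R] : Type _ := Quotient (annSetoid R)

/-- The class of a nonzero zero divisor. -/
def cls (R : Type*) [CommRing R] (a : ZD R) : GammaEV R :=
  Quotient.mk (annSetoid R) a

/-- The graph `Γ_E(R)` of equivalence classes of zero divisors. -/
def gammaE (R : Type*) [CommRing R] : SimpleGraph (GammaEV R) where
  Adj u v := u ≠ v ∧ ∃ a b : ZD R, cls R a = u ∧ cls R b = v ∧ a.1 * b.1 = 0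
  symm := ⟨by
    rintro u v ⟨huv, a, b, ha, hb, hab⟩
    exact ⟨huv.symm, b, a, hb, ha, by rwa [mul_comm] at hab⟩⟩
  loopless := ⟨by rintro u ⟨h, -⟩; exact h rfl⟩

/-- `I` is a maximal element of the family `F = {ann x : 0 ≠ x ∈ R}`. -/
def MaxAnn (R : Type*) [CommRing R] (I : Ideal R) : Prop :=
  (∃ x : R, x ≠ 0 ∧ I = ann R x) ∧
    ∀ y : R, y ≠ 0 → I ≤ ann R y → I = ann R y

lemma mem_ann_iff (R : Type*) [CommRing R] (x r : R) : r ∈ ann R x ↔ r * x = 0 := by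
  rw [ann, Ideal.mem_torsionOf_iff, smul_eq_mul]

lemma ZD.spec {R : Type*} [CommRing R] (a : ZD R) :
    a.1 ≠ 0 ∧ ∃ y : R, y ≠ 0 ∧ a.1 * y = 0 := a.2

lemma cls_eq_iff {R : Type*} [CommRing R] (a b : ZD R) :
    cls R a = cls R b ↔ ann R a.1 = ann R b.1 := by
  constructor
  · intro h; exact Quotient.exact h
  · intro h; exact Quotient.sound h

theorem stmt16 (R : Type*) [CommRing R] [IsNoetherianRing R]
    (hcard : 4 ≤ (Set.univ : Set (GammaEV R)).encard)
    (b : ZD R) (hprime : (ann R b.1).IsPrime) :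
    2 ≤ ((gammaE R).neighborSet (cls R b)).encard := by
  by_contra hdeg
  push_neg at hdeg
  set N := (gammaE R).neighborSet (cls R b) with hNdef
  have hle1 : N.encard ≤ 1 := by simpa using hdeg
  have hN : ∀ u v, u ∈ N → v ∈ N → u = v := Set.encard_le_one_iff.mp hle1
  set S : Set (GammaEV R) := insert (cls R b) N with hSdef
  have hS2 : S.encard ≤ 2 := by
    refine (Set.encard_insert_le _ _).trans ?_
    calc N.encard + 1 ≤ 1 + 1 := add_le_add_left hle1 1
    _ = 2 := by norm_num
  -- the complement of S has at least 2 elements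
  have hun : (Set.univ : Set (GammaEV R)).encard ≤ S.encard + Sᶜ.encard := by
    rw [← Set.union_compl_self S]; exact Set.encard_union_le _ _
  have h4 : (4 : ℕ∞) ≤ 2 + Sᶜ.encard :=
    le_trans hcard (le_trans hun (add_le_add_left hS2 _))
  have hcompl : 2 ≤ Sᶜ.encard := by
    have h2 : (2:ℕ∞) + 2 ≤ 2 + Sᶜ.encard := by norm_num at h4 ⊢; exact h4
    exact (WithTop.add_le_add_iff_left (by norm_num : (2:ℕ∞) ≠ ⊤)).mp h2
  obtain ⟨u, v, hu, hv, huv⟩ :=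
    Set.one_lt_encard_iff.mp (lt_of_lt_of_le (by norm_num : (1:ℕ∞) < 2) hcompl)
  -- key fact: any killer of a vertex outside S gives a neighbor of [b]
  have key : ∀ t : ZD R, cls R t ∉ S → ∀ z : ZD R, z.1 * t.1 = 0 → cls R z ∈ N := by
    intro t htS z hzt
    have htb : cls R t ≠ cls R b := fun h => htS (by rw [hSdef]; exact Set.mem_insert_iff.mpr (Or.inl h))
    have htN : cls R t ∉ N := fun h => htS (by rw [hSdef]; exact Set.mem_insert_iff.mpr (Or.inr h))
    -- t ∉ p
    have htp : t.1 ∉ ann R b.1 := by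
      intro hmem
      have hprod : b.1 * t.1 = 0 := by
        rw [mul_comm]; exact (mem_ann_iff R b.1 t.1).mp hmem
      exact htN ((gammaE R).mem_neighborSet _ _ |>.mpr ⟨htb.symm, b, t, rfl, rfl, hprod⟩)
    -- z ∈ p
    have hzp : z.1 ∈ ann R b.1 := by
      have h0 : z.1 * t.1 ∈ ann R b.1 := by rw [hzt]; exact (ann R b.1).zero_mem
      rcases hprime.mem_or_mem h0 with h | h
      · exact h
      · exact absurd h htp
    -- cls z ≠ cls b
    have hzb : cls R z ≠ cls R b := by
      intro h
      have : ann R z.1 = ann R b.1 := (cls_eq_iff z b).mp h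
      have : t.1 ∈ ann R b.1 := by
        rw [← this, mem_ann_iff, mul_comm]; exact hzt
      exact htp this
    have hprod : b.1 * z.1 = 0 := by
      rw [mul_comm]; exact (mem_ann_iff R b.1 z.1).mp hzp
    exact (gammaE R).mem_neighborSet _ _ |>.mpr ⟨hzb.symm, b, z, rfl, rfl, hprod⟩
  -- extract representatives
  obtain ⟨y, hy⟩ := Quotient.exists_rep u
  obtain ⟨w, hw⟩ := Quotient.exists_rep v
  have hyS : cls R y ∉ S := by rw [show cls R y = u from hy]; exact hu
  have hwS : cls R w ∉ S := by rw [show cls R w = v from hw]; exact hv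
  obtain ⟨hy0, ty, hty0, hyty⟩ := y.spec
  obtain ⟨hw0, tw, htw0, hwtw⟩ := w.spec
  -- one inclusion
  have incl : ∀ (a c : ZD R), cls R a ∉ S → cls R c ∉ S →
      ∀ tc : R, tc ≠ 0 → c.1 * tc = 0 → ann R a.1 ≤ ann R c.1 := by
    intro a c haS hcS tc htc0 hctc r hr
    have hra : r * a.1 = 0 := (mem_ann_iff R a.1 r).mp hr
    rcases eq_or_ne r 0 with rfl | hr0
    · exact (ann R c.1).zero_mem
    · have ha0 : a.1 ≠ 0 := a.spec.1
      set rz : ZD R := ⟨r, hr0, a.1, ha0, hra⟩ with hrzdef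
      have hrzN : cls R rz ∈ N := key a haS rz hra
      have htcc : tc * c.1 = 0 := by rw [mul_comm]; exact hctc
      set cz : ZD R := ⟨tc, htc0, c.1, c.spec.1, htcc⟩ with hczdef
      have hczN : cls R cz ∈ N := key c hcS cz htcc
      have heq : ann R rz.1 = ann R cz.1 := (cls_eq_iff rz cz).mp (hN _ _ hrzN hczN)
      have hwc : c.1 ∈ ann R cz.1 := by rw [mem_ann_iff, mul_comm]; exact htcc
      have hcr : c.1 ∈ ann R rz.1 := heq ▸ hwc
      have : c.1 * r = 0 := (mem_ann_iff R rz.1 c.1).mp hcr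
      rw [mem_ann_iff, mul_comm]; exact this
  have hanneq : ann R y.1 = ann R w.1 :=
    le_antisymm (incl y w hyS hwS tw htw0 hwtw) (incl w y hwS hyS ty hty0 hyty)
  exact huv (by rw [← hy, ← hw]; exact Quotient.sound hanneq)
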